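/- Let $A \subset \mathbb{Z}^n$ be a finite subset, $r \le r' \le n$, and let $\pi' : \mathbb{Z}^n \to \mathbb{Z}^{r'}$ and $\varpi : \mathbb{Z}^{r'} \to \mathbb{Z}^r$ be surjective group homomorphisms with $\pi = \varpi \circ \pi'$. For $\pi(A) = \{u'_0,\ldots,u'_r\}$ define $M_i = \langle (\pi^{-1}(u'_i)\cap A) - (\pi^{-1}(u'_i)\cap A)\rangle \subseteq \ker\pi$, and similarly for $\pi'(A) = \{v'_0,\ldots,v'_{r'}\}$ define $M'_j = \langle (\pi'^{-1}(v'_j)\cap A) - (\pi'^{-1}(v'_j)\cap A)\rangle \subseteq \ker\pi'$. Assume $\pi(A)$ has exactly $r+1$ elements that are $\mathbb{Z}$-affinely independent, $\pi'(A)$ has exactly $r'+1$ elements that are $\mathbb{Z}$-affinely independent, and that $\sum_{j=0}^{r'} M'_j \subseteq \ker\pi'$ is the internal direct sum of the $M'_j$. Then $\sum_{i=0}^{r} M_i \subseteq \ker\pi$ is the internal direct sum of the $M_i$. -/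

import Mathlib

open Pointwise

/-- The point `e_i` of the standard simplex `{0, e_1, …, e_r} ⊂ ℤ^r` (with `e_0 = 0`). -/
def cayleyVertex {r : ℕ} (i : Fin (r + 1)) : Fin r → ℤ :=
  fun j => if (j : ℕ) + 1 = (i : ℕ) then 1 else 0

/-- Two subsets of free abelian groups are `ℤ`-affinely equivalent if an affine isomorphism
(a group isomorphism followed by a translation) maps one onto the other. -/
def ZAffineEquiv {M M' : Type*} [AddCommGroup M] [AddCommGroup M']
    (S : Set M) (S' : Set M') : Prop :=
  ∃ (e : M ≃+ M') (t : M'), (fun x => e x + t) '' S = S'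


lemma cayley_inj {r : ℕ} : Function.Injective (cayleyVertex (r := r)) := by
  have key : ∀ i i' : Fin (r + 1), cayleyVertex i = cayleyVertex i' →
      (i' : ℕ) ≠ 0 → (i : ℕ) = (i' : ℕ) := by
    intro i i' h hne
    obtain ⟨k, hk⟩ := Nat.exists_eq_succ_of_ne_zero hne
    have hkr : k < r := by omega
    have := congrFun h ⟨k, hkr⟩
    simp only [cayleyVertex, hk] at this
    rw [if_true] at this
    split_ifs at this with h1
    · omega
    · exact absurd this (by norm_num)
  intro i i' h
  by_cases h0 : (i' : ℕ) = 0
  · by_cases h0' : (i : ℕ) = 0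
    · exact Fin.ext (by omega)
    · exact absurd (key i' i h.symm h0') (by omega)
  · exact Fin.ext (key i i' h h0)

lemma factF {r' : ℕ} (u' : Fin (r' + 1) → (Fin r' → ℤ)) (hu' : Function.Injective u')
    (haff : ZAffineEquiv (Set.range u') (Set.range (cayleyVertex (r := r'))))
    (d : Fin (r' + 1) → ℤ) (h1 : ∑ j, d j • u' j = 0) (h2 : ∑ j, d j = 0) :
    ∀ j, d j = 0 := by
  obtain ⟨e, t, he⟩ := haff
  have hg : ∀ j, ∃ p, cayleyVertex p = e (u' j) + t := by
    intro j
    have : e (u' j) + t ∈ Set.range (cayleyVertex (r := r')) := by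
      rw [← he]; exact ⟨u' j, ⟨j, rfl⟩, rfl⟩
    exact this
  choose g hg using hg
  have hginj : Function.Injective g := by
    intro j k h
    apply hu'
    apply e.injective
    have := (hg j).symm.trans ((congrArg cayleyVertex h).trans (hg k))
    exact add_right_cancel this
  have hsum : ∑ j, d j • cayleyVertex (g j) = 0 := by
    calc ∑ j, d j • cayleyVertex (g j)
        = ∑ j, (e (d j • u' j) + d j • t) :=
          Finset.sum_congr rfl fun j _ => by rw [hg, smul_add, map_zsmul]
      _ = e (∑ j, d j • u' j) + (∑ j, d j) • t := by
          rw [Finset.sum_add_distrib, map_sum, Finset.sum_smul]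
      _ = 0 := by rw [h1, h2, map_zero, zero_smul, add_zero]
  have hkey : ∀ j, (g j : ℕ) ≠ 0 → d j = 0 := by
    intro j hj
    obtain ⟨k, hk⟩ := Nat.exists_eq_succ_of_ne_zero hj
    have hkr : k < r' := by omega
    have hco := congrFun hsum ⟨k, hkr⟩
    rw [Finset.sum_apply] at hco
    have : ∀ j' : Fin (r' + 1), (d j' • cayleyVertex (g j')) ⟨k, hkr⟩
        = if g j' = g j then d j' else 0 := by
      intro j'
      simp only [Pi.smul_apply, cayleyVertex, smul_eq_mul]
      by_cases h' : g j' = g j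
      · rw [if_pos h', if_pos (by rw [h']; omega), mul_one]
      · rw [if_neg h', if_neg (by intro hc; exact h' (Fin.ext (by omega))), mul_zero]
    rw [Finset.sum_congr rfl fun j' _ => this j'] at hco
    rw [Finset.sum_eq_single j (fun j' _ h' => if_neg (fun hc => h' (hginj hc)))
      (by simp)] at hco
    simpa using hco
  intro j
  by_cases hj : (g j : ℕ) = 0
  · have hz : ∀ j', j' ≠ j → d j' = 0 := by
      intro j' hne
      refine hkey j' fun h0 => hne (hginj (Fin.ext (by omega)))
    calc d j = ∑ j', d j' := by
          rw [Finset.sum_eq_single j (fun j' _ h => hz j' h) (by simp)]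
      _ = 0 := h2
  · exact hkey j hj

lemma collapse_helper {r r' : ℕ} (β : Fin (r' + 1) → Fin (r + 1))
    {G : Type*} [AddCommGroup G] (c : Fin (r + 1) → Fin (r' + 1) → G)
    (hc : ∀ i j, i ≠ β j → c i j = 0) :
    ∑ i, ∑ j, c i j = ∑ j, c (β j) j := by
  rw [Finset.sum_comm]
  exact Finset.sum_congr rfl fun j _ =>
    Finset.sum_eq_single (β j) (fun i _ h => hc i j h) (by simp)

lemma reindex_helper {r r' : ℕ} (β : Fin (r' + 1) → Fin (r + 1))
    (pick : Fin (r + 1) → Fin (r' + 1)) (hβpick : ∀ i, β (pick i) = i)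
    {G : Type*} [AddCommGroup G] (f : Fin (r + 1) → G) :
    ∑ j, (if pick (β j) = j then f (β j) else 0) = ∑ i, f i := by
  have step : ∀ j : Fin (r' + 1),
      (if pick (β j) = j then f (β j) else 0) = ∑ i, (if j = pick i then f i else 0) := by
    intro j
    rw [Finset.sum_eq_single (β j)
      (fun i _ h => if_neg (fun hc => h (by rw [← hβpick i, ← hc]))) (by simp)]
    simp [eq_comm]
  rw [Finset.sum_congr rfl fun j _ => step j, Finset.sum_comm]
  exact Finset.sum_congr rfl fun i _ => by rw [Finset.sum_ite_eq' Finset.univ (pick i) (fun _ => f i)]; simp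

/-- let `π = ϖ ∘ π'` with `π' : ℤ^n → ℤ^{r'}` and `ϖ : ℤ^{r'} → ℤ^r` surjective,
let `π(A) = {u'₀,…,u'_r}` consist of `r+1` `ℤ`-affinely independent points and
`π'(A) = {v'₀,…,v'_{r'}}` of `r'+1` `ℤ`-affinely independent points.  If the subgroups
`M'_j = ⟨(π'⁻¹(v'_j) ∩ A) - (π'⁻¹(v'_j) ∩ A)⟩` form an internal direct sum, then so do the
subgroups `M_i = ⟨(π⁻¹(u'_i) ∩ A) - (π⁻¹(u'_i) ∩ A)⟩`. -/
theorem stmt14 {n r r' : ℕ} (hrr' : r ≤ r') (hr'n : r' ≤ n)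
    (A : Set (Fin n → ℤ)) (hA : A.Finite)
    (π' : (Fin n → ℤ) →+ (Fin r' → ℤ)) (hπ' : Function.Surjective π')
    (ϖ : (Fin r' → ℤ) →+ (Fin r → ℤ)) (hϖ : Function.Surjective ϖ)
    (u : Fin (r + 1) → (Fin r → ℤ)) (hu : Function.Injective u)
    (huA : Set.range u = ⇑(ϖ.comp π') '' A)
    (huaff : ZAffineEquiv (Set.range u) (Set.range (cayleyVertex (r := r))))
    (u' : Fin (r' + 1) → (Fin r' → ℤ)) (hu' : Function.Injective u')
    (hu'A : Set.range u' = ⇑π' '' A)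
    (hu'aff : ZAffineEquiv (Set.range u') (Set.range (cayleyVertex (r := r'))))
    (hds' : ∀ v : Fin (r' + 1) → (Fin n → ℤ),
      (∀ j, v j ∈ AddSubgroup.closure ((⇑π' ⁻¹' {u' j} ∩ A) - (⇑π' ⁻¹' {u' j} ∩ A))) →
      ∑ j, v j = 0 → ∀ j, v j = 0) :
    ∀ v : Fin (r + 1) → (Fin n → ℤ),
      (∀ i, v i ∈ AddSubgroup.closure
        ((⇑(ϖ.comp π') ⁻¹' {u i} ∩ A) - (⇑(ϖ.comp π') ⁻¹' {u i} ∩ A))) →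
      ∑ i, v i = 0 → ∀ i, v i = 0 := by
  intro v hv hvsum
  -- choose a representative in each fiber of π'
  have haux : ∀ j, ∃ x, x ∈ A ∧ π' x = u' j := by
    intro j
    have h : u' j ∈ ⇑π' '' A := by rw [← hu'A]; exact ⟨j, rfl⟩
    obtain ⟨x, hx, hx'⟩ := h
    exact ⟨x, hx, hx'⟩
  choose a haA haπ using haux
  -- the blocks: β j is the index of the π-fiber containing the π'-fiber of u' j
  have hbaux : ∀ j, ∃ i, u i = ϖ (u' j) := by
    intro j
    have h : ϖ (u' j) ∈ Set.range u := by
      rw [huA]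
      exact ⟨a j, haA j, by simp [AddMonoidHom.comp_apply, haπ j]⟩
    obtain ⟨i, hi⟩ := h
    exact ⟨i, hi⟩
  choose β hβ using hbaux
  -- a section of β
  have hpaux : ∀ i, ∃ j, ϖ (u' j) = u i := by
    intro i
    have h : u i ∈ ⇑(ϖ.comp π') '' A := by rw [← huA]; exact ⟨i, rfl⟩
    obtain ⟨x, hx, hx'⟩ := h
    have h2 : π' x ∈ Set.range u' := by rw [hu'A]; exact ⟨x, hx, rfl⟩
    obtain ⟨j, hj⟩ := h2
    exact ⟨j, by rw [hj]; exact hx'⟩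
  choose pick hpick using hpaux
  have hβpick : ∀ i, β (pick i) = i := fun i => hu (by rw [hβ, hpick])
  -- elements of M'_j are in the kernel of π'
  have hMker : ∀ j, ∀ x ∈ AddSubgroup.closure
      ((⇑π' ⁻¹' {u' j} ∩ A) - (⇑π' ⁻¹' {u' j} ∩ A)), π' x = 0 := by
    intro j x hx
    induction hx using AddSubgroup.closure_induction with
    | mem y hy =>
      obtain ⟨p, hp, q, hq, rfl⟩ := hy
      rw [map_sub, hp.1, hq.1, sub_self]
    | zero => exact map_zero π'
    | add y z _ _ hy hz => rw [map_add, hy, hz, add_zero]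
    | neg y _ hy => rw [map_neg, hy, neg_zero]
  -- key decomposition of elements of M_i
  have key : ∀ i : Fin (r + 1), ∀ x ∈ AddSubgroup.closure
      ((⇑(ϖ.comp π') ⁻¹' {u i} ∩ A) - (⇑(ϖ.comp π') ⁻¹' {u i} ∩ A)),
      ∃ (w : Fin (r' + 1) → (Fin n → ℤ)) (c : Fin (r' + 1) → ℤ),
        (∀ j, w j ∈ AddSubgroup.closure ((⇑π' ⁻¹' {u' j} ∩ A) - (⇑π' ⁻¹' {u' j} ∩ A))) ∧
        (∀ j, β j ≠ i → w j = 0 ∧ c j = 0) ∧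
        x = ∑ j, (w j + c j • (a j - a (pick i))) := by
    intro i x hx
    induction hx using AddSubgroup.closure_induction with
    | mem y hy =>
      obtain ⟨p, hp, q, hq, rfl⟩ := hy
      obtain ⟨jp, hjp⟩ : π' p ∈ Set.range u' := by rw [hu'A]; exact ⟨p, hp.2, rfl⟩
      obtain ⟨jq, hjq⟩ : π' q ∈ Set.range u' := by rw [hu'A]; exact ⟨q, hq.2, rfl⟩
      have hβjp : β jp = i := hu (by rw [hβ, hjp]; exact hp.1)
      have hβjq : β jq = i := hu (by rw [hβ, hjq]; exact hq.1)
      refine ⟨fun j => (if j = jp then p - a jp else 0) + (if j = jq then a jq - q else 0),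
        fun j => (if j = jp then (1 : ℤ) else 0) - (if j = jq then 1 else 0), ?_, ?_, ?_⟩
      · intro j
        refine add_mem ?_ ?_
        · split_ifs with h
          · subst h
            exact AddSubgroup.subset_closure
              (Set.sub_mem_sub ⟨hjp.symm, hp.2⟩ ⟨haπ j, haA j⟩)
          · exact zero_mem _
        · split_ifs with h
          · subst h
            exact AddSubgroup.subset_closure
              (Set.sub_mem_sub ⟨haπ j, haA j⟩ ⟨hjq.symm, hq.2⟩)
          · exact zero_mem _
      · intro j hj
        have h1 : j ≠ jp := fun h => hj (h ▸ hβjp)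
        have h2 : j ≠ jq := fun h => hj (h ▸ hβjq)
        simp [h1, h2]
      · have hterm : ∀ j : Fin (r' + 1),
            ((if j = jp then p - a jp else 0) + (if j = jq then a jq - q else 0))
              + ((if j = jp then (1 : ℤ) else 0) - (if j = jq then 1 else 0))
                • (a j - a (pick i))
            = ((if j = jp then p - a jp else 0) + (if j = jq then a jq - q else 0))
              + ((if j = jp then a j - a (pick i) else 0)
                - (if j = jq then a j - a (pick i) else 0)) := by
          intro j
          rw [sub_smul, ite_smul, ite_smul, one_smul, zero_smul]
        rw [Finset.sum_congr rfl fun j _ => hterm j]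
        rw [Finset.sum_add_distrib, Finset.sum_add_distrib, Finset.sum_sub_distrib,
          Finset.sum_ite_eq' Finset.univ jp, Finset.sum_ite_eq' Finset.univ jq,
          Finset.sum_ite_eq' Finset.univ jp, Finset.sum_ite_eq' Finset.univ jq]
        simp only [Finset.mem_univ, if_true]
        abel
    | zero =>
      exact ⟨0, 0, fun j => zero_mem _, fun j _ => ⟨rfl, rfl⟩, by simp⟩
    | add y z _ _ hy hz =>
      obtain ⟨w1, c1, hm1, hs1, he1⟩ := hy
      obtain ⟨w2, c2, hm2, hs2, he2⟩ := hz
      refine ⟨w1 + w2, c1 + c2, fun j => add_mem (hm1 j) (hm2 j), ?_, ?_⟩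
      · intro j hj
        simp [Pi.add_apply, (hs1 j hj).1, (hs1 j hj).2, (hs2 j hj).1, (hs2 j hj).2]
      · have hterm : ∀ j : Fin (r' + 1),
            (w1 + w2) j + (c1 + c2) j • (a j - a (pick i))
            = (w1 j + c1 j • (a j - a (pick i))) + (w2 j + c2 j • (a j - a (pick i))) := by
          intro j
          simp only [Pi.add_apply, add_smul]
          abel
        rw [Finset.sum_congr rfl fun j _ => hterm j, Finset.sum_add_distrib, ← he1, ← he2]
    | neg y _ hy =>
      obtain ⟨w1, c1, hm1, hs1, he1⟩ := hy
      refine ⟨-w1, -c1, fun j => neg_mem (hm1 j), ?_, ?_⟩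
      · intro j hj
        simp [(hs1 j hj).1, (hs1 j hj).2]
      · have hterm : ∀ j : Fin (r' + 1),
            (-w1) j + (-c1) j • (a j - a (pick i))
            = -(w1 j + c1 j • (a j - a (pick i))) := by
          intro j
          simp only [Pi.neg_apply, neg_smul]
          abel
        rw [Finset.sum_congr rfl fun j _ => hterm j, Finset.sum_neg_distrib, ← he1]
  -- apply the decomposition to every v i
  choose w c hw hsupp hrep using fun i => key i (v i) (hv i)
  have hwzero : ∀ i j, i ≠ β j → w i j = 0 := fun i j h => (hsupp i j (Ne.symm h)).1
  have hczero' : ∀ i j, i ≠ β j → c i j = 0 := fun i j h => (hsupp i j (Ne.symm h)).2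
  set W : Fin (r' + 1) → (Fin n → ℤ) := fun j => w (β j) j with hW
  -- the total sum identity
  have hsum0 : ∑ j, W j + ∑ i, ∑ j, c i j • (a j - a (pick i)) = 0 := by
    have h1 : ∑ i, v i
        = ∑ i, ∑ j, w i j + ∑ i, ∑ j, c i j • (a j - a (pick i)) := by
      rw [← Finset.sum_add_distrib]
      refine Finset.sum_congr rfl fun i _ => ?_
      rw [hrep i, Finset.sum_add_distrib]
    have h2 : ∑ i, ∑ j, w i j = ∑ j, W j :=
      collapse_helper β w hwzero
    rw [← h2, ← h1, hvsum]
  have hπ'W : ∀ j, π' (W j) = 0 := fun j => hMker j _ (hw (β j) j)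
  -- push to ℤ^{r'}
  have hT : ∑ i, ∑ j, c i j • (u' j - u' (pick i)) = 0 := by
    have := congrArg π' hsum0
    rw [map_zero, map_add, map_sum] at this
    rw [Finset.sum_congr rfl fun j _ => hπ'W j, Finset.sum_const, smul_zero, zero_add] at this
    rw [map_sum] at this
    rw [Finset.sum_congr rfl fun i _ => map_sum π' _ _] at this
    rw [← this]
    refine Finset.sum_congr rfl fun i _ => Finset.sum_congr rfl fun j _ => ?_
    rw [map_zsmul, map_sub, haπ, haπ]
  -- the affine-independence coefficients
  set d : Fin (r' + 1) → ℤ :=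
    fun j => c (β j) j - (if pick (β j) = j then ∑ k, c (β j) k else 0) with hd
  have hd2 : ∑ j, d j = 0 := by
    rw [Finset.sum_sub_distrib]
    rw [← collapse_helper β c hczero', reindex_helper β pick hβpick (fun i => ∑ k, c i k)]
    exact sub_self _
  have hd1 : ∑ j, d j • u' j = 0 := by
    have e1 : ∑ j, d j • u' j
        = ∑ j, c (β j) j • u' j
          - ∑ j, (if pick (β j) = j then (∑ k, c (β j) k) • u' (pick (β j)) else 0) := by
      rw [← Finset.sum_sub_distrib]
      refine Finset.sum_congr rfl fun j _ => ?_
      rw [hd, sub_smul, ite_smul, zero_smul]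
      congr 1
      split_ifs with h
      · rw [h]
      · rfl
    have e2 : ∑ j, c (β j) j • u' j = ∑ i, ∑ j, c i j • u' j :=
      (collapse_helper β (fun i j => c i j • u' j)
        (fun i j h => by show c i j • u' j = 0; rw [hczero' i j h, zero_smul])).symm
    have e3 : ∑ j, (if pick (β j) = j then (∑ k, c (β j) k) • u' (pick (β j)) else 0)
        = ∑ i, (∑ k, c i k) • u' (pick i) :=
      reindex_helper β pick hβpick (fun i => (∑ k, c i k) • u' (pick i))
    have e4 : ∑ i, ∑ j, c i j • u' j - ∑ i, (∑ k, c i k) • u' (pick i)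
        = ∑ i, ∑ j, c i j • (u' j - u' (pick i)) := by
      rw [← Finset.sum_sub_distrib]
      refine Finset.sum_congr rfl fun i _ => ?_
      rw [Finset.sum_smul, ← Finset.sum_sub_distrib]
      refine Finset.sum_congr rfl fun j _ => ?_
      rw [smul_sub]
    rw [e1, e2, e3, e4, hT]
  have hdz : ∀ j, d j = 0 := factF u' hu' hu'aff d hd1 hd2
  -- hence all translation parts vanish
  have hcvec : ∀ i j, c i j • (a j - a (pick i)) = 0 := by
    intro i j
    by_cases h1 : i = β j
    · by_cases h2 : pick i = j
      · rw [← h2, sub_self, smul_zero]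
      · have hdj := hdz j
        simp only [hd] at hdj
        have h' : ¬(pick (β j) = j) := by rw [← h1]; exact h2
        rw [if_neg h', sub_zero] at hdj
        rw [h1, hdj, zero_smul]
    · rw [hczero' i j h1, zero_smul]
  -- conclude via the direct sum hypothesis for the fine fibration
  have hWsum : ∑ j, W j = 0 := by
    have : ∑ i, ∑ j, c i j • (a j - a (pick i)) = 0 :=
      Finset.sum_eq_zero fun i _ => Finset.sum_eq_zero fun j _ => hcvec i j
    rwa [this, add_zero] at hsum0
  have hW0 : ∀ j, W j = 0 := hds' W (fun j => hw (β j) j) hWsum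
  intro i
  rw [hrep i]
  refine Finset.sum_eq_zero fun j _ => ?_
  rw [hcvec i j, add_zero]
  by_cases h : i = β j
  · rw [h]; exact hW0 j
  · exact hwzero i j h
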